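/- Let q be a power of a prime p and let k be a positive integer. The induced Dickson map D̄_k : F_q → F_q is a bijection (permutation of F_q) if and only if gcd(k, q² - 1) = 1. -/

import Mathlib

open Polynomial

/-- In a field, `y + y⁻¹ = z + z⁻¹` iff `z ∈ {y, y⁻¹}`. -/
lemma add_inv_eq_add_inv_iff {K : Type*} [Field K] {y z : K} (hy : y ≠ 0) (hz : z ≠ 0) :
    y + y⁻¹ = z + z⁻¹ ↔ z = y ∨ z = y⁻¹ := by
  constructor
  · intro h
    have key : (y - z) * (y * z - 1) = 0 := by
      have h2 : (y - z) * (y * z - 1) = ((y + y⁻¹) - (z + z⁻¹)) * (y * z) := by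
        field_simp
        ring
      rw [h2, h, sub_self, zero_mul]
    rcases mul_eq_zero.mp key with h1 | h1
    · left; exact (sub_eq_zero.mp h1).symm
    · right
      exact eq_inv_of_mul_eq_one_right (sub_eq_zero.mp h1)
  · rintro (rfl | rfl)
    · rfl
    · rw [inv_inv, add_comm]

/-- Evaluation of the Dickson polynomial at `y + y⁻¹`. -/
lemma aeval_dickson_add_inv {K : Type*} [Field K] (k : ℕ) (y : K) (hy : y ≠ 0) :
    Polynomial.aeval (y + y⁻¹) (Polynomial.dickson 1 (1 : ℤ) k) = y ^ k + y⁻¹ ^ k := by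
  rw [Polynomial.aeval_def, Polynomial.eval₂_eq_eval_map, Polynomial.map_dickson, map_one,
    Polynomial.dickson_one_one_eval_add_inv _ _ (mul_inv_cancel₀ hy)]

/-- If `gcd k m = 1` and `y^m = z^m = 1` with `1 < m`, then `y^k = z^k → y = z`. -/
lemma pow_k_inj {K : Type*} [Field K] {k m : ℕ} (hm : 1 < m) (hcop : Nat.gcd k m = 1)
    {y z : K} (hy : y ^ m = 1) (hz : z ^ m = 1) (h : y ^ k = z ^ k) : y = z := by
  obtain ⟨c, -, hc⟩ := Nat.exists_mul_mod_eq_one_of_coprime hcop hm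
  have key : ∀ w : K, w ^ m = 1 → w ^ (k * c) = w := by
    intro w hw
    have hd : m * (k * c / m) + k * c % m = k * c := Nat.div_add_mod _ _
    rw [← hd, hc, pow_add, pow_mul, hw, one_pow, one_mul, pow_one]
  calc y = y ^ (k * c) := (key y hy).symm
    _ = (y ^ k) ^ c := by rw [pow_mul]
    _ = (z ^ k) ^ c := by rw [h]
    _ = z ^ (k * c) := by rw [pow_mul]
    _ = z := key z hz

/-- An element of an extension of a finite field `F` of cardinality `q` satisfying `a^q = a`
lies in the image of `F`. -/
lemma mem_range_algebraMap_of_pow_card {F K : Type*} [Field F] [Fintype F] [Field K]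
    [Algebra F K] {q : ℕ} (hF : Fintype.card F = q) {a : K} (ha : a ^ q = a) :
    ∃ x : F, algebraMap F K x = a := by
  classical
  have hq2 : 1 < q := hF ▸ Fintype.one_lt_card
  set P : K[X] := X ^ q - X with hP
  have hPne : P ≠ 0 := FiniteField.X_pow_card_sub_X_ne_zero K hq2
  have hdeg : P.natDegree = q := FiniteField.X_pow_card_sub_X_natDegree_eq K hq2
  set T : Finset K := Finset.image (algebraMap F K) Finset.univ with hT
  have hTsub : T ⊆ P.roots.toFinset := by
    intro b hb
    rw [hT, Finset.mem_image] at hb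
    obtain ⟨x, _, rfl⟩ := hb
    rw [Multiset.mem_toFinset, Polynomial.mem_roots hPne]
    simp only [hP, IsRoot.def, eval_sub, eval_pow, eval_X]
    rw [← map_pow, ← hF, FiniteField.pow_card, sub_self]
  have hcardT : T.card = q := by
    rw [hT, Finset.card_image_of_injective _ (algebraMap F K).injective,
      Finset.card_univ, hF]
  have hcardR : P.roots.toFinset.card ≤ q :=
    le_trans (Multiset.toFinset_card_le _) (le_trans (Polynomial.card_roots' P) hdeg.le)
  have hTeq : T = P.roots.toFinset :=
    Finset.eq_of_subset_of_card_le hTsub (by rw [hcardT]; exact hcardR)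
  have haR : a ∈ P.roots.toFinset := by
    rw [Multiset.mem_toFinset, Polynomial.mem_roots hPne]
    simp only [hP, IsRoot.def, eval_sub, eval_pow, eval_X]
    rw [ha, sub_self]
  rw [← hTeq, hT, Finset.mem_image] at haR
  obtain ⟨x, _, hx⟩ := haR
  exact ⟨x, hx⟩

/-- the induced Dickson map `D̄_k : F_q → F_q` is a bijection if and only if
`gcd(k, q² - 1) = 1`. -/
theorem stmt_2 (p n q k : ℕ) (hp : p.Prime) (hn : 0 < n) (hq : q = p ^ n) (hk : 0 < k)
    (F : Type) [Field F] [Fintype F] (hF : Fintype.card F = q) :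
    Function.Bijective (fun x : F => Polynomial.aeval x (Polynomial.dickson 1 (1 : ℤ) k))
      ↔ Nat.gcd k (q ^ 2 - 1) = 1 := by
  classical
  haveI : Fact p.Prime := ⟨hp⟩
  have hq2 : 2 ≤ q := hF ▸ Fintype.one_lt_card
  set m : ℕ := q ^ 2 - 1 with hm
  have hq2m : m + 1 = q ^ 2 := by
    have : 1 ≤ q ^ 2 := Nat.one_le_pow _ _ (by omega)
    omega
  have hm1 : 1 < m := by nlinarith [sq_nonneg q, hq2m]
  -- char of F is p
  have hcharF : CharP F p := by
    obtain ⟨m', hm'p, hm'card⟩ := FiniteField.card F (ringChar F)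
    have h1 : p ^ n = ringChar F ^ (m' : ℕ) := by rw [← hq, ← hF, hm'card]
    have hpd : p ∣ ringChar F ^ (m' : ℕ) := h1 ▸ dvd_pow_self p hn.ne'
    have : p = ringChar F := ((Nat.prime_dvd_prime_iff_eq hp hm'p).mp
      (hp.dvd_of_dvd_pow hpd))
    exact this ▸ ringChar.charP F
  set K := AlgebraicClosure F with hK
  haveI : CharP K p := charP_of_injective_algebraMap (algebraMap F K).injective p
  -- Frobenius x ↦ x^q as a ring hom on K
  set Φ : K →+* K := iterateFrobenius K p n with hΦdef
  have hΦ : ∀ a : K, Φ a = a ^ q := fun a => by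
    rw [hΦdef, iterateFrobenius_def, ← hq]
  have hFrobF : ∀ x : F, (algebraMap F K x) ^ q = algebraMap F K x := by
    intro x
    rw [← map_pow, ← hF, FiniteField.pow_card]
  -- every element `y` with `y + y⁻¹` in the image of `F` satisfies `y ^ m = 1`
  have hym : ∀ (y : K) (x : F), y ≠ 0 → y + y⁻¹ = algebraMap F K x → y ^ m = 1 := by
    intro y x hy hxy
    have hΦy : Φ y + (Φ y)⁻¹ = y + y⁻¹ := by
      have h0 : Φ (y + y⁻¹) = y + y⁻¹ := by rw [hxy, hΦ, hFrobF]
      rw [map_add, map_inv₀] at h0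
      exact h0
    have hΦy0 : Φ y ≠ 0 := by
      rw [hΦ]; exact pow_ne_zero _ hy
    have hq2y : y ^ q ^ 2 = y := by
      rcases (add_inv_eq_add_inv_iff hy hΦy0).mp hΦy.symm with h | h
      · rw [hΦ] at h
        rw [pow_two, mul_comm, pow_mul, h, h]
      · rw [hΦ] at h
        rw [pow_two, mul_comm, pow_mul, h, inv_pow, h, inv_inv]
    have : y ^ m * y = y := by rw [← pow_succ, hq2m, hq2y]
    have := mul_right_cancel₀ hy (this.trans (one_mul y).symm)
    exact this
  constructor
  · -- bijective → gcd = 1 (contrapositive)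
    intro hbij
    by_contra hgcd
    -- take a prime ℓ dividing gcd k m
    set d := Nat.gcd k m with hd
    have hd0 : d ≠ 0 := Nat.gcd_ne_zero_left hk.ne'
    set l := d.minFac with hl
    have hlp : l.Prime := Nat.minFac_prime hgcd
    have hlk : l ∣ k := (Nat.minFac_dvd d).trans (Nat.gcd_dvd_left _ _)
    have hlm : l ∣ m := (Nat.minFac_dvd d).trans (Nat.gcd_dvd_right _ _)
    have hlp' : l ≠ p := by
      intro hle
      have hpq : p ∣ q := hq ▸ dvd_pow_self p hn.ne'
      have h1 : p ∣ q ^ 2 := hpq.trans (dvd_pow_self q two_ne_zero)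
      have h3 : p ∣ q ^ 2 - m := Nat.dvd_sub h1 (hle ▸ hlm)
      rw [show q ^ 2 - m = 1 by omega] at h3
      exact hp.one_lt.ne' (Nat.eq_one_of_dvd_one h3)
    haveI : NeZero ((l : ℕ) : K) := by
      refine ⟨fun h0 => ?_⟩
      rw [CharP.cast_eq_zero_iff K p] at h0
      exact hlp' ((Nat.prime_dvd_prime_iff_eq hp hlp).mp h0).symm
    -- get a primitive l-th root of unity ζ in K
    obtain ⟨ζ, hζroot⟩ := IsAlgClosed.exists_root (Polynomial.cyclotomic l K)
      (by rw [Polynomial.degree_cyclotomic]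
          exact_mod_cast (Nat.totient_pos.mpr hlp.pos).ne')
    have hζ : IsPrimitiveRoot ζ l := (Polynomial.isRoot_cyclotomic_iff).mp hζroot
    have hζl : ζ ^ l = 1 := hζ.pow_eq_one
    have hζ0 : ζ ≠ 0 := by
      intro h; rw [h, zero_pow hlp.pos.ne'] at hζl; exact zero_ne_one hζl
    have hζ1 : ζ ≠ 1 := by
      intro h
      have := hζ.dvd_of_pow_eq_one 1 (by rw [h, one_pow])
      exact hlp.one_lt.ne' (Nat.eq_one_of_dvd_one this)
    have hζk : ζ ^ k = 1 := by
      obtain ⟨t, ht⟩ := hlk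
      rw [ht, pow_mul, hζl, one_pow]
    -- ζ^q = ζ or ζ⁻¹
    have hfac : m = (q - 1) * (q + 1) := by
      obtain ⟨r, rfl⟩ : ∃ r, q = 1 + r := ⟨q - 1, by omega⟩
      have h1 : (1 + r) ^ 2 = r * (r + 2) + 1 := by ring
      have h2 : (1 + r) - 1 = r := by omega
      have h3 : (1 + r) + 1 = r + 2 := by omega
      rw [hm, h1, h2, h3, Nat.add_sub_cancel]
    have hζq : ζ ^ q = ζ ∨ ζ ^ q = ζ⁻¹ := by
      rcases (Nat.Prime.dvd_mul hlp).mp (hfac ▸ hlm) with h | h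
      · left
        obtain ⟨t, ht⟩ := h
        have : ζ ^ (q - 1) = 1 := by rw [ht, pow_mul, hζl, one_pow]
        calc ζ ^ q = ζ ^ (q - 1) * ζ := by
              rw [← pow_succ]; congr 1; omega
          _ = ζ := by rw [this, one_mul]
      · right
        obtain ⟨t, ht⟩ := h
        have h1 : ζ ^ (q + 1) = 1 := by rw [ht, pow_mul, hζl, one_pow]
        have h2 : ζ ^ q * ζ = 1 := by rw [← pow_succ]; exact h1
        exact eq_inv_of_mul_eq_one_left h2
    -- x' := ζ + ζ⁻¹ is in the image of F
    have hx'q : (ζ + ζ⁻¹) ^ q = ζ + ζ⁻¹ := by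
      have : Φ (ζ + ζ⁻¹) = ζ + ζ⁻¹ := by
        rw [map_add, map_inv₀, hΦ]
        rcases hζq with h | h
        · rw [h]
        · rw [h, inv_inv, add_comm]
      rw [← hΦ]; exact this
    obtain ⟨x, hx⟩ := mem_range_algebraMap_of_pow_card hF hx'q
    -- D_k(x') = 2 = D_k(2), but x' ≠ 2
    have hD1 : Polynomial.aeval (ζ + ζ⁻¹) (Polynomial.dickson 1 (1 : ℤ) k) = 2 := by
      erw [aeval_dickson_add_inv k ζ hζ0, hζk, inv_pow, hζk, inv_one]
      norm_num
    have hD2 : Polynomial.aeval ((2 : K)) (Polynomial.dickson 1 (1 : ℤ) k) = 2 := by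
      have h2 : (2 : K) = 1 + 1⁻¹ := by norm_num
      erw [h2, aeval_dickson_add_inv k (1 : K) one_ne_zero, one_pow, inv_one, one_pow]
    have hinj := hbij.injective
    have heq : Polynomial.aeval x (Polynomial.dickson 1 (1 : ℤ) k)
        = Polynomial.aeval (2 : F) (Polynomial.dickson 1 (1 : ℤ) k) := by
      apply (algebraMap F K).injective
      rw [← Polynomial.aeval_algebraMap_apply, ← Polynomial.aeval_algebraMap_apply, hx,
        map_ofNat, hD1, hD2]
    have hx2 : x = 2 := hinj heq
    have : ζ + ζ⁻¹ = (1 : K) + 1⁻¹ := by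
      rw [← hx, hx2, map_ofNat]; norm_num
    rcases (add_inv_eq_add_inv_iff one_ne_zero (hζ0)).mp this.symm with h | h
    · exact hζ1 h
    · rw [inv_one] at h; exact hζ1 h
  · -- gcd = 1 → bijective
    intro hgcd
    rw [← Finite.injective_iff_bijective]
    intro x₁ x₂ hx
    simp only at hx
    -- write each algebraMap xᵢ as yᵢ + yᵢ⁻¹ in K
    have hroot : ∀ x : F, ∃ y : K, y ≠ 0 ∧ y + y⁻¹ = algebraMap F K x := by
      intro x
      obtain ⟨y, hy⟩ := IsAlgClosed.exists_root
        (X ^ 2 - Polynomial.C (algebraMap F K x) * X + 1)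
        (by
          have : (X ^ 2 - Polynomial.C (algebraMap F K x) * X + 1 : K[X]).natDegree = 2 := by
            compute_degree!
          intro hdeg
          rw [Polynomial.degree_eq_natDegree (fun h0 => by simp [h0] at this), this] at hdeg
          exact two_ne_zero (by exact_mod_cast hdeg))
      have hy' : y ^ 2 - algebraMap F K x * y + 1 = 0 := by
        simpa [Polynomial.IsRoot] using hy
      have hy0 : y ≠ 0 := by
        rintro rfl
        simp at hy'
      refine ⟨y, hy0, ?_⟩
      have hinv : y⁻¹ = algebraMap F K x - y := by
        refine (eq_inv_of_mul_eq_one_right ?_).symm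
        linear_combination -hy'
      rw [hinv]; ring
    obtain ⟨y₁, hy₁0, hy₁⟩ := hroot x₁
    obtain ⟨y₂, hy₂0, hy₂⟩ := hroot x₂
    have hy₁m : y₁ ^ m = 1 := hym y₁ x₁ hy₁0 hy₁
    have hy₂m : y₂ ^ m = 1 := hym y₂ x₂ hy₂0 hy₂
    -- push hx to K
    have hxK : Polynomial.aeval (algebraMap F K x₁) (Polynomial.dickson 1 (1 : ℤ) k)
        = Polynomial.aeval (algebraMap F K x₂) (Polynomial.dickson 1 (1 : ℤ) k) := by
      rw [Polynomial.aeval_algebraMap_apply, Polynomial.aeval_algebraMap_apply, hx]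
    erw [← hy₁, ← hy₂, aeval_dickson_add_inv k y₁ hy₁0, aeval_dickson_add_inv k y₂ hy₂0] at hxK
    rw [inv_pow, inv_pow] at hxK
    have hk₁ : y₁ ^ k ≠ 0 := pow_ne_zero _ hy₁0
    have hk₂ : y₂ ^ k ≠ 0 := pow_ne_zero _ hy₂0
    have hinvm : ∀ y : K, y ^ m = 1 → y⁻¹ ^ m = 1 := by
      intro y hy; rw [inv_pow, hy, inv_one]
    have key : y₂ = y₁ ∨ y₂ = y₁⁻¹ := by
      rcases (add_inv_eq_add_inv_iff hk₁ hk₂).mp hxK with h | h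
      · left; exact pow_k_inj hm1 hgcd hy₂m hy₁m h
      · right
        have h' : y₂ ^ k = y₁⁻¹ ^ k := by rw [h, inv_pow]
        exact pow_k_inj hm1 hgcd hy₂m (hinvm y₁ hy₁m) h'
    apply (algebraMap F K).injective
    rw [← hy₁, ← hy₂]
    rcases key with rfl | rfl
    · rfl
    · rw [inv_inv, add_comm]
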